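/- Let (Ω, F, P) be a probability space and ψ : Ω → ℝ a measurable function with ∫ e^ψ dP < ∞ and ∫ |ψ| e^ψ dP < ∞. Define the probability measure Q* by dQ*/dP = e^ψ / ∫ e^ψ dP. Then Q* is absolutely continuous with respect to P, ψ is Q*-integrable, KL(Q*‖P) < ∞, and ∫ ψ dQ* − KL(Q*‖P) = ln ∫ e^ψ dP; that is, Q* attains the supremum in the free energy–entropy duality. -/

import Mathlib

open MeasureTheory

/-- The Kullback-Leibler divergence of `Q` with respect to `P`,
`KL(Q‖P) = ∫ ln(dQ/dP) dQ`. -/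
noncomputable def KLdiv {Ω : Type*} [MeasurableSpace Ω] (Q P : Measure Ω) : ℝ :=
  ∫ ω, Real.log ((Q.rnDeriv P ω).toReal) ∂Q

/-- The tilted measure `Q*` with `dQ*/dP = e^ψ / ∫ e^ψ dP`. -/
noncomputable def tiltedMeasure {Ω : Type*} [MeasurableSpace Ω] (P : Measure Ω)
    (ψ : Ω → ℝ) : Measure Ω :=
  P.withDensity fun ω => ENNReal.ofReal (Real.exp (ψ ω) / ∫ ω', Real.exp (ψ ω') ∂P)

lemma tiltedMeasure_eq_tilted {Ω : Type*} [MeasurableSpace Ω] (P : Measure Ω) (ψ : Ω → ℝ) :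
    tiltedMeasure P ψ = P.tilted ψ := rfl

/-- The Gibbs measure `Q*` with density `e^ψ / ∫ e^ψ dP` with respect to `P` attains the
supremum in the free energy-entropy duality: it is a probability measure absolutely
continuous w.r.t. `P`, `ψ` is `Q*`-integrable, its KL divergence is finite (the defining
integral is integrable), and `∫ ψ dQ* − KL(Q*‖P) = ln ∫ e^ψ dP`. -/
theorem tilted_measure_attains_free_energy {Ω : Type*} [MeasurableSpace Ω]
    (P : Measure Ω) [IsProbabilityMeasure P] (ψ : Ω → ℝ) (hψ : Measurable ψ)
    (h1 : Integrable (fun ω => Real.exp (ψ ω)) P)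
    (h2 : Integrable (fun ω => |ψ ω| * Real.exp (ψ ω)) P) :
    IsProbabilityMeasure (tiltedMeasure P ψ) ∧
    tiltedMeasure P ψ ≪ P ∧
    Integrable ψ (tiltedMeasure P ψ) ∧
    Integrable (fun ω => Real.log (((tiltedMeasure P ψ).rnDeriv P ω).toReal))
      (tiltedMeasure P ψ) ∧
    (∫ ω, ψ ω ∂(tiltedMeasure P ψ)) - KLdiv (tiltedMeasure P ψ) P
      = Real.log (∫ ω, Real.exp (ψ ω) ∂P) := by
  rw [tiltedMeasure_eq_tilted]
  set Z := ∫ ω, Real.exp (ψ ω) ∂P with hZ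
  have hZpos : 0 < Z := integral_exp_pos h1
  have hprob : IsProbabilityMeasure (P.tilted ψ) := isProbabilityMeasure_tilted h1
  have hac : P.tilted ψ ≪ P := tilted_absolutelyContinuous P ψ
  -- integrability of ψ w.r.t. the tilted measure
  have hint : Integrable ψ (P.tilted ψ) := by
    rw [Measure.tilted, integrable_withDensity_iff
      (by exact (hψ.exp.div_const _).ennreal_ofReal) (.of_forall fun ω => ENNReal.ofReal_lt_top)]
    have : Integrable (fun ω => ψ ω * (Real.exp (ψ ω) / Z)) P := by
      have := h2.div_const Z
      refine (this.congr (.of_forall fun ω => rfl)).mono' (hψ.mul (hψ.exp.div_const Z)).aestronglyMeasurable ?_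
      filter_upwards with ω
      rw [Real.norm_eq_abs, abs_mul, abs_of_nonneg (by positivity : (0:ℝ) ≤ Real.exp (ψ ω) / Z),
        mul_div_assoc]
    refine this.congr (.of_forall fun ω => ?_)
    simp only [ENNReal.toReal_ofReal (by positivity : (0:ℝ) ≤ Real.exp (ψ ω) / ∫ ω', Real.exp (ψ ω') ∂P), hZ]
  have hlog : (fun ω => Real.log (((P.tilted ψ).rnDeriv P ω).toReal))
      =ᵐ[P.tilted ψ] fun ω => ψ ω - Real.log Z :=
    hac.ae_eq (log_rnDeriv_tilted_left_self h1)
  have hintlog : Integrable (fun ω => Real.log (((P.tilted ψ).rnDeriv P ω).toReal))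
      (P.tilted ψ) := by
    refine Integrable.congr ?_ hlog.symm
    exact hint.sub (integrable_const _)
  refine ⟨hprob, hac, hint, hintlog, ?_⟩
  have : KLdiv (P.tilted ψ) P = (∫ ω, ψ ω ∂(P.tilted ψ)) - Real.log Z := by
    rw [KLdiv, integral_congr_ae hlog, integral_sub hint (integrable_const _),
      integral_const, probReal_univ, one_smul]
  rw [this]; ring
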